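/- Let φ(t) = max(t,0) be ReLU and define its Hermite coefficients c_k(b) by φ(t + b) = Σ_{k≥0} (c_k(b)/k!) H_{e_k}(t) under the standard Gaussian measure, where H_{e_k} is the k-th probabilists' Hermite polynomial. Then c₁(b) = 1 − Φ(−b), and for every k ≥ 2, c_k(b) = (e^{−b²/2}/√(2π)) · H_{e_{k−2}}(−b), where Φ is the standard normal CDF. -/

import Mathlib

open MeasureTheory ProbabilityTheory Polynomial Real Set Filter

noncomputable def G : ℝ → ℝ := fun z => Real.exp (-(z ^ 2 / 2))

lemma integrable_poly_gauss (p : ℤ[X]) : Integrable (fun x : ℝ => (aeval x p : ℝ) * G x) := by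
  induction p using Polynomial.induction_on' with
  | add p q hp hq => simpa [add_mul, Pi.add_def] using hp.add hq
  | monomial n a =>
      have h : Integrable (fun x : ℝ => x ^ (n : ℝ) * Real.exp (-(1/2 : ℝ) * x ^ 2)) :=
        integrable_rpow_mul_exp_neg_mul_sq (by norm_num)
          (lt_of_lt_of_le (by norm_num) (Nat.cast_nonneg n))
      simp_rw [Real.rpow_natCast] at h
      refine (h.const_mul (a : ℝ)).congr (ae_of_all _ fun x => ?_)
      simp [G, aeval_monomial]
      ring_nf

lemma tendsto_poly_gauss (p : ℤ[X]) :
    Tendsto (fun x : ℝ => (aeval x p : ℝ) * G x) atTop (nhds 0) := by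
  induction p using Polynomial.induction_on' with
  | add p q hp hq =>
      have := hp.add hq
      simp only [add_zero] at this
      exact this.congr fun x => by simp [add_mul]
  | monomial n a =>
      have h : (fun x : ℝ => x ^ (n : ℝ) * Real.exp (-(1/2 : ℝ) * x ^ 2)) =o[atTop]
          fun x => Real.exp (-(1/2 : ℝ) * x) :=
        rpow_mul_exp_neg_mul_sq_isLittleO_exp_neg (by norm_num) _
      have hlin : Tendsto (fun x : ℝ => -(1/2 : ℝ) * x) atTop atBot := by
        have h1 := (tendsto_id (α := ℝ) (x := atTop)).const_mul_atTop
          (show (0:ℝ) < 1/2 by norm_num)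
        refine Tendsto.congr (fun x => ?_) (tendsto_neg_atTop_atBot.comp h1)
        simp [Function.comp]
      have h0 := h.tendsto_zero_of_tendsto (Real.tendsto_exp_atBot.comp hlin)
      simp_rw [Real.rpow_natCast] at h0
      have := h0.const_mul (a : ℝ)
      simp only [mul_zero] at this
      refine this.congr fun x => ?_
      simp [G, aeval_monomial]
      ring_nf

lemma hasDerivAt_hermite_gauss (n : ℕ) (x : ℝ) :
    HasDerivAt (fun z => (aeval z (hermite n) : ℝ) * G z)
      (-((aeval x (hermite (n + 1)) : ℝ) * G x)) x := by
  have hG : HasDerivAt G (-x * G x) x := by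
    have h1 : HasDerivAt (fun z : ℝ => -(z ^ 2 / 2)) (-x) x := by
      have := ((hasDerivAt_pow 2 x).div_const 2).neg
      exact this.congr_deriv (by ring)
    have := h1.exp
    exact this.congr_deriv (by rw [G]; ring)
  have hP := (hermite n).hasDerivAt_aeval (𝕜 := ℝ) x
  refine (hP.mul hG).congr_deriv ?_
  rw [hermite_succ]
  simp only [map_sub, map_mul, aeval_X]
  ring

lemma hasDerivAt_gauss (x : ℝ) : HasDerivAt G (-x * G x) x := by
  have h1 : HasDerivAt (fun z : ℝ => -(z ^ 2 / 2)) (-x) x := by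
    have := ((hasDerivAt_pow 2 x).div_const 2).neg
    exact this.congr_deriv (by ring)
  exact h1.exp.congr_deriv (by rw [G]; ring)

lemma integrable_shift_hermite_gauss (b : ℝ) (k : ℕ) :
    Integrable (fun z : ℝ => (z + b) * (aeval z (hermite k) : ℝ) * G z) := by
  have h1 := integrable_poly_gauss (X * hermite k)
  have h2 := (integrable_poly_gauss (hermite k)).const_mul b
  refine (h1.add h2).congr (ae_of_all _ fun x => ?_)
  simp only [Pi.add_apply, map_mul, aeval_X]
  ring

lemma tendsto_shift_hermite_gauss (b : ℝ) (k : ℕ) :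
    Tendsto (fun z : ℝ => (z + b) * (aeval z (hermite k) : ℝ) * G z) atTop (nhds 0) := by
  have h1 := tendsto_poly_gauss (X * hermite k)
  have h2 := (tendsto_poly_gauss (hermite k)).const_mul b
  simp only [mul_zero] at h2
  have := h1.add h2
  simp only [add_zero] at this
  refine this.congr fun x => ?_
  simp only [map_mul, aeval_X]
  ring

lemma key_integral (b : ℝ) (n : ℕ) :
    (∫ z in Ioi (-b), (z + b) * (aeval z (hermite (n + 2)) : ℝ) * G z)
      = (aeval (-b) (hermite n) : ℝ) * G (-b) := by
  set F : ℝ → ℝ := fun z =>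
    -((z + b) * ((aeval z (hermite (n + 1)) : ℝ) * G z)) - (aeval z (hermite n) : ℝ) * G z
    with hF
  have hderiv : ∀ x : ℝ, HasDerivAt F ((x + b) * (aeval x (hermite (n + 2)) : ℝ) * G x) x := by
    intro x
    have h1 : HasDerivAt (fun z : ℝ => z + b) 1 x := (hasDerivAt_id x).add_const b
    have h2 := hasDerivAt_hermite_gauss (n + 1) x
    have h3 := hasDerivAt_hermite_gauss n x
    have h12 := h1.mul h2
    have := h12.neg.sub h3
    refine this.congr_deriv ?_
    ring
  have hcont : ContinuousWithinAt F (Ici (-b)) (-b) :=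
    (hderiv (-b)).continuousAt.continuousWithinAt
  have hint : IntegrableOn (fun z : ℝ => (z + b) * (aeval z (hermite (n + 2)) : ℝ) * G z)
      (Ioi (-b)) := (integrable_shift_hermite_gauss b (n + 2)).integrableOn
  have htend : Tendsto F atTop (nhds 0) := by
    have ht1 : Tendsto (fun z : ℝ => (z + b) * ((aeval z (hermite (n + 1)) : ℝ) * G z))
        atTop (nhds 0) :=
      (tendsto_shift_hermite_gauss b (n + 1)).congr fun x => by ring
    have ht2 : Tendsto (fun z : ℝ => (aeval z (hermite n) : ℝ) * G z) atTop (nhds 0) :=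
      tendsto_poly_gauss (hermite n)
    have h := ht1.neg.sub ht2
    simp only [neg_zero, sub_zero] at h
    exact h
  rw [integral_Ioi_of_hasDerivAt_of_tendsto hcont (fun x _ => hderiv x) hint htend]
  simp [hF]

lemma key_integral_one (b : ℝ) :
    (∫ z in Ioi (-b), ((z + b) * z - 1) * G z) = 0 := by
  set A : ℝ → ℝ := fun z => (-z - b) * G z with hA
  have hderiv : ∀ x : ℝ, HasDerivAt A (((x + b) * x - 1) * G x) x := by
    intro x
    have h1 : HasDerivAt (fun z : ℝ => -z - b) (-1) x := ((hasDerivAt_id x).neg).sub_const b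
    have := h1.mul (hasDerivAt_gauss x)
    refine this.congr_deriv ?_
    ring
  have hcont : ContinuousWithinAt A (Ici (-b)) (-b) :=
    (hderiv (-b)).continuousAt.continuousWithinAt
  have hint : IntegrableOn (fun z : ℝ => ((z + b) * z - 1) * G z) (Ioi (-b)) := by
    have h1 := integrable_poly_gauss (X ^ 2 - 1)
    have h2 := (integrable_poly_gauss X).const_mul b
    refine ((h1.add h2).congr (ae_of_all _ fun x => ?_)).integrableOn
    simp only [Pi.add_apply, map_sub, map_pow, map_one, aeval_X]
    ring
  have htend : Tendsto A atTop (nhds 0) := by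
    have h1 := (tendsto_poly_gauss X).neg
    have h2 := (tendsto_poly_gauss 1).const_mul (-b)
    simp only [neg_zero, mul_zero] at h1 h2
    have h := h1.add h2
    simp only [add_zero] at h
    refine h.congr fun x => ?_
    simp only [aeval_X, map_one]
    ring
  rw [integral_Ioi_of_hasDerivAt_of_tendsto hcont (fun x _ => hderiv x) hint htend]
  simp [hA]

lemma pdf_eq (x : ℝ) :
    gaussianPDFReal 0 1 x = (Real.sqrt (2 * Real.pi))⁻¹ * G x := by
  simp [gaussianPDFReal, G, neg_div]

lemma gauss_integral_eq (f : ℝ → ℝ) :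
    ∫ z, f z ∂(gaussianReal 0 1) = ∫ z, gaussianPDFReal 0 1 z * f z := by
  rw [gaussianReal_of_var_ne_zero 0 one_ne_zero]
  have hm : Measurable (fun x => (gaussianPDFReal 0 1 x).toNNReal) :=
    (measurable_gaussianPDFReal 0 1).real_toNNReal
  rw [show gaussianPDF 0 1 = fun x => ((gaussianPDFReal 0 1 x).toNNReal : ENNReal) from rfl]
  rw [integral_withDensity_eq_integral_smul hm]
  congr 1
  ext x
  simp [NNReal.smul_def, Real.coe_toNNReal _ (gaussianPDFReal_nonneg 0 1 x)]

lemma indicator_eq (b : ℝ) (k : ℕ) :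
    (fun z => gaussianPDFReal 0 1 z * (max (z + b) 0 * (aeval z (hermite k) : ℝ)))
      = (Ioi (-b)).indicator
          (fun z => (Real.sqrt (2 * Real.pi))⁻¹ * ((z + b) * (aeval z (hermite k) : ℝ) * G z)) := by
  funext z
  by_cases h : z ∈ Ioi (-b)
  · rw [Set.indicator_of_mem h, pdf_eq]
    rw [max_eq_left (by simp only [mem_Ioi] at h; linarith)]
    ring
  · rw [Set.indicator_of_notMem h]
    rw [max_eq_right (by simp only [mem_Ioi, not_lt] at h; linarith)]
    ring

lemma main_reduction (b : ℝ) (k : ℕ) :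
    (∫ z, max (z + b) 0 * (aeval z (hermite k) : ℝ) ∂(gaussianReal 0 1))
      = (Real.sqrt (2 * Real.pi))⁻¹ *
          ∫ z in Ioi (-b), (z + b) * (aeval z (hermite k) : ℝ) * G z := by
  rw [gauss_integral_eq, indicator_eq, integral_indicator measurableSet_Ioi,
    MeasureTheory.integral_const_mul]

theorem stmt17 (b : ℝ) :
    (∫ z, max (z + b) 0 * (Polynomial.aeval z (Polynomial.hermite 1) : ℝ)
        ∂(gaussianReal 0 1))
      = 1 - ((gaussianReal 0 1) (Set.Iic (-b))).toReal ∧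
    ∀ k : ℕ, 2 ≤ k →
      (∫ z, max (z + b) 0 * (Polynomial.aeval z (Polynomial.hermite k) : ℝ)
          ∂(gaussianReal 0 1))
        = Real.exp (-b ^ 2 / 2) / Real.sqrt (2 * Real.pi) *
            (Polynomial.aeval (-b) (Polynomial.hermite (k - 2)) : ℝ) := by
  constructor
  · -- k = 1 case
    rw [main_reduction b 1]
    -- RHS manipulation
    have hsum : ((gaussianReal 0 1) (Iic (-b))).toReal + ((gaussianReal 0 1) (Ioi (-b))).toReal
        = 1 := by
      rw [← ENNReal.toReal_add (measure_ne_top _ _) (measure_ne_top _ _),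
        ← measure_union (Iic_disjoint_Ioi le_rfl) measurableSet_Ioi, Iic_union_Ioi,
        measure_univ, ENNReal.toReal_one]
    have hIoi : ((gaussianReal 0 1) (Ioi (-b))).toReal
        = (Real.sqrt (2 * Real.pi))⁻¹ * ∫ z in Ioi (-b), G z := by
      rw [gaussianReal_apply_eq_integral 0 one_ne_zero,
        ENNReal.toReal_ofReal (setIntegral_nonneg measurableSet_Ioi
          fun x _ => gaussianPDFReal_nonneg 0 1 x)]
      rw [show (fun x => gaussianPDFReal 0 1 x) = fun x => (Real.sqrt (2 * Real.pi))⁻¹ * G x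
        from funext pdf_eq]
      rw [MeasureTheory.integral_const_mul]
    have hint1 : (∫ z in Ioi (-b), (z + b) * (aeval z (hermite 1) : ℝ) * G z)
        = ∫ z in Ioi (-b), G z := by
      have hA : IntegrableOn (fun z : ℝ => (z + b) * (aeval z (hermite 1) : ℝ) * G z)
          (Ioi (-b)) := (integrable_shift_hermite_gauss b 1).integrableOn
      have hB : IntegrableOn G (Ioi (-b)) := by
        have := integrable_poly_gauss 1
        simp only [map_one, one_mul] at this
        exact this.integrableOn
      have h0 := key_integral_one b
      have heq : (∫ z in Ioi (-b), (z + b) * (aeval z (hermite 1) : ℝ) * G z)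
          - ∫ z in Ioi (-b), G z = 0 := by
        rw [← integral_sub hA hB]
        rw [← h0]
        refine setIntegral_congr_fun measurableSet_Ioi fun x _ => ?_
        simp only [hermite_one, aeval_X]
        ring
      linarith
    rw [hint1, show (1 : ℝ) - ((gaussianReal 0 1) (Iic (-b))).toReal
        = ((gaussianReal 0 1) (Ioi (-b))).toReal by linarith, hIoi]
  · intro k hk
    obtain ⟨m, rfl⟩ : ∃ m, k = m + 2 := ⟨k - 2, by omega⟩
    rw [main_reduction b (m + 2), key_integral b m]
    simp only [Nat.add_sub_cancel]
    rw [show G (-b) = Real.exp (-b ^ 2 / 2) by rw [G]; rw [neg_sq]; ring_nf]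
    ring
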